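/- In M(4,K), the matrices E₁₃, E₁₄, E₂₃, E₂₄ pairwise commute, and the unital subalgebra of M(4,K) they generate is 5-dimensional, with basis (I₄, E₁₃, E₁₄, E₂₃, E₂₄). In particular, four commuting 4×4 matrices can generate an algebra of dimension strictly greater than 4. -/

import Mathlib

open Matrix

/-- E₁₃, E₁₄, E₂₃, E₂₄ in M(4,K) pairwise commute and generate a
unital subalgebra of dimension 5, with basis (I₄, E₁₃, E₁₄, E₂₃, E₂₄); in
particular its dimension exceeds 4. -/
theorem stmt2 {K : Type*} [Field K] :
    ∀ (A B C D : Matrix (Fin 4) (Fin 4) K),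
      A = Matrix.single 0 2 1 → B = Matrix.single 0 3 1 →
      C = Matrix.single 1 2 1 → D = Matrix.single 1 3 1 →
      (A * B = B * A ∧ A * C = C * A ∧ A * D = D * A ∧
        B * C = C * B ∧ B * D = D * B ∧ C * D = D * C) ∧
      (Algebra.adjoin K ({A, B, C, D} : Set (Matrix (Fin 4) (Fin 4) K))).toSubmodule
        = Submodule.span K ({1, A, B, C, D} : Set (Matrix (Fin 4) (Fin 4) K)) ∧
      LinearIndependent K ![1, A, B, C, D] ∧
      Module.finrank K
        (Algebra.adjoin K ({A, B, C, D} : Set (Matrix (Fin 4) (Fin 4) K))) = 5 ∧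
      4 < Module.finrank K
        (Algebra.adjoin K ({A, B, C, D} : Set (Matrix (Fin 4) (Fin 4) K))) := by
  intro A B C D hA hB hC hD
  have hz : ∀ x ∈ ({A, B, C, D} : Set (Matrix (Fin 4) (Fin 4) K)),
      ∀ y ∈ ({A, B, C, D} : Set (Matrix (Fin 4) (Fin 4) K)), x * y = 0 := by
    subst hA hB hC hD
    simp only [Set.mem_insert_iff, Set.mem_singleton_iff]
    rintro x (rfl|rfl|rfl|rfl) y (rfl|rfl|rfl|rfl) <;>
      exact Matrix.single_mul_single_of_ne _ _ _ _ (by decide) _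
  have hAm : A ∈ ({A, B, C, D} : Set (Matrix (Fin 4) (Fin 4) K)) := by simp
  have hBm : B ∈ ({A, B, C, D} : Set (Matrix (Fin 4) (Fin 4) K)) := by simp
  have hCm : C ∈ ({A, B, C, D} : Set (Matrix (Fin 4) (Fin 4) K)) := by simp
  have hDm : D ∈ ({A, B, C, D} : Set (Matrix (Fin 4) (Fin 4) K)) := by simp
  refine ⟨⟨?_, ?_, ?_, ?_, ?_, ?_⟩, ?_⟩
  · rw [hz A hAm B hBm, hz B hBm A hAm]
  · rw [hz A hAm C hCm, hz C hCm A hAm]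
  · rw [hz A hAm D hDm, hz D hDm A hAm]
  · rw [hz B hBm C hCm, hz C hCm B hBm]
  · rw [hz B hBm D hDm, hz D hDm B hBm]
  · rw [hz C hCm D hDm, hz D hDm C hCm]
  -- now the algebraic part
  have hli : LinearIndependent K ![1, A, B, C, D] := by
    subst hA hB hC hD
    rw [Fintype.linearIndependent_iff]
    intro g hg
    have h := fun i j => congrFun (congrFun hg i) j
    have h00 := h 0 0
    have h02 := h 0 2
    have h03 := h 0 3
    have h12 := h 1 2
    have h13 := h 1 3
    simp [Fin.sum_univ_five, Matrix.add_apply, Matrix.smul_apply, Matrix.one_apply,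
      Matrix.single, Matrix.zero_apply] at h00 h02 h03 h12 h13
    intro i
    fin_cases i <;> assumption
  have hrange : ({1, A, B, C, D} : Set (Matrix (Fin 4) (Fin 4) K))
      = Set.range ![1, A, B, C, D] := by
    ext x
    simp [Matrix.range_cons]
    tauto
  -- span is a subalgebra
  have hmul : ∀ x y : Matrix (Fin 4) (Fin 4) K,
      x ∈ Submodule.span K ({1, A, B, C, D} : Set (Matrix (Fin 4) (Fin 4) K)) →
      y ∈ Submodule.span K ({1, A, B, C, D} : Set (Matrix (Fin 4) (Fin 4) K)) →
      x * y ∈ Submodule.span K ({1, A, B, C, D} : Set (Matrix (Fin 4) (Fin 4) K)) := by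
    intro x y hx hy
    have : Submodule.span K ({1, A, B, C, D} : Set (Matrix (Fin 4) (Fin 4) K)) *
        Submodule.span K ({1, A, B, C, D} : Set (Matrix (Fin 4) (Fin 4) K)) ≤
        Submodule.span K ({1, A, B, C, D} : Set (Matrix (Fin 4) (Fin 4) K)) := by
      rw [Submodule.span_mul_span]
      apply Submodule.span_le.2
      rintro z ⟨p, hp, q, hq, rfl⟩
      show p * q ∈ _
      simp only [Set.mem_insert_iff, Set.mem_singleton_iff] at hp hq
      rcases hp with rfl | hp
      · rw [one_mul]
        exact Submodule.subset_span (by simpa using hq)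
      rcases hq with rfl | hq
      · rw [mul_one]
        exact Submodule.subset_span (by simp [hp])
      · rw [hz p (by simpa using hp) q (by simpa using hq)]
        exact Submodule.zero_mem _
    exact this (Submodule.mul_mem_mul hx hy)
  have h1mem : (1 : Matrix (Fin 4) (Fin 4) K) ∈
      Submodule.span K ({1, A, B, C, D} : Set (Matrix (Fin 4) (Fin 4) K)) :=
    Submodule.subset_span (by simp)
  have heq : (Algebra.adjoin K ({A, B, C, D} : Set (Matrix (Fin 4) (Fin 4) K))).toSubmodule
      = Submodule.span K ({1, A, B, C, D} : Set (Matrix (Fin 4) (Fin 4) K)) := by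
    apply le_antisymm
    · have hle : Algebra.adjoin K ({A, B, C, D} : Set (Matrix (Fin 4) (Fin 4) K)) ≤
          (Submodule.span K ({1, A, B, C, D} : Set (Matrix (Fin 4) (Fin 4) K))).toSubalgebra
            h1mem hmul := by
        rw [Algebra.adjoin_le_iff]
        intro x hx
        exact Submodule.subset_span (by simp only [Set.mem_insert_iff,
          Set.mem_singleton_iff] at hx ⊢; tauto)
      exact hle
    · apply Submodule.span_le.2
      rintro x hx
      simp only [Set.mem_insert_iff, Set.mem_singleton_iff] at hx
      rcases hx with rfl | rfl | rfl | rfl | rfl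
      · exact Subalgebra.one_mem _
      · exact Algebra.subset_adjoin hAm
      · exact Algebra.subset_adjoin hBm
      · exact Algebra.subset_adjoin hCm
      · exact Algebra.subset_adjoin hDm
  have hfr : Module.finrank K
      (Algebra.adjoin K ({A, B, C, D} : Set (Matrix (Fin 4) (Fin 4) K))) = 5 := by
    have : Module.finrank K
        (Algebra.adjoin K ({A, B, C, D} : Set (Matrix (Fin 4) (Fin 4) K)))
        = Module.finrank K
          (Submodule.span K ({1, A, B, C, D} : Set (Matrix (Fin 4) (Fin 4) K))) := by
      rw [← heq]; rfl
    rw [this, hrange, finrank_span_eq_card hli]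
    rfl
  exact ⟨heq, hli, hfr, by omega⟩
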